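/- (Intertwining property of the modification matrix under the shift z → z + τ) Let N ≥ 1, τ ∈ ℂ with Im τ > 0, u₁, …, u_N ∈ ℂ, and define the N × N matrix Ξ₁(z) with entries Ξ₁_{kj}(z) = θ[k/N − 1/2; N/2](z − N u_j, Nτ) for 1 ≤ k, j ≤ N. Then for all z ∈ ℂ and 1 ≤ j ≤ N: Ξ₁_{kj}(z + τ) = exp(2πi(−z/N − τ/(2N) + u_j − 1/2)) · Ξ₁_{k+1, j}(z) for 1 ≤ k ≤ N − 1, and Ξ₁_{N j}(z + τ) = exp(2πi(−z/N − τ/(2N) + u_j − 1/2)) · Ξ₁_{1 j}(z). Consequently Ξ₁(z + τ) = exp(−2πi(z/N + τ/(2N))) · Λ⁻¹-type cyclic shift of rows of Ξ₁(z) multiplied on the right by the diagonal matrix diag(exp(2πi(u_j − 1/2))). -/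
import Mathlib


noncomputable section

/-- The theta function with characteristics
θ[a; b](z, τ) = Σ_{j∈ℤ} exp(2πi((j+a)²τ/2 + (j+a)(z+b))). -/
def thetaC (a b z τ : ℂ) : ℂ :=
  ∑' j : ℤ, Complex.exp (2 * Real.pi * Complex.I *
    (((j : ℂ) + a) ^ 2 * τ / 2 + ((j : ℂ) + a) * (z + b)))

/-- The modification (Hecke transformation) matrix
Ξ₁_{kj}(z) = θ[k/N − 1/2; N/2](z − N u_j, Nτ), with rows indexed by k = 1, …, N
(represented by `k : Fin N` with value `k.val + 1`). -/
def XiMat (N : ℕ) (τ : ℂ) (u : Fin N → ℂ) (z : ℂ) : Matrix (Fin N) (Fin N) ℂ :=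
  Matrix.of fun k j =>
    thetaC (((k.val : ℂ) + 1) / N - 1 / 2) ((N : ℂ) / 2) (z - N * u j) (N * τ)

lemma thetaC_add_int (a b w c : ℂ) (m : ℤ) :
    thetaC (a + (m : ℂ)) b w c = thetaC a b w c := by
  unfold thetaC
  have h := (Equiv.addRight m).tsum_eq (fun j : ℤ => Complex.exp (2 * Real.pi * Complex.I *
    (((j : ℂ) + a) ^ 2 * c / 2 + ((j : ℂ) + a) * (w + b))))
  rw [← h]
  congr 1
  funext j
  simp only [Equiv.coe_addRight]
  push_cast
  ring_nf

lemma thetaC_shift (a b w c s : ℂ) :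
    thetaC a b (w + c * s) c =
      Complex.exp (2 * Real.pi * Complex.I * (-c * s ^ 2 / 2 - s * (w + b))) *
        thetaC (a + s) b w c := by
  unfold thetaC
  rw [← tsum_mul_left]
  congr 1
  funext j
  rw [← Complex.exp_add]
  congr 1
  ring

/-- Intertwining property of the modification matrix under z → z + τ:
Ξ₁_{kj}(z + τ) = exp(2πi(−z/N − τ/(2N) + u_j − 1/2)) Ξ₁_{k+1, j}(z),
where the row index k + 1 is understood cyclically (k = N wraps around to 1),
so that Ξ₁(z+τ) is the cyclic row shift of Ξ₁(z) multiplied by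
exp(−2πi(z/N + τ/(2N))) and by the diagonal matrix diag(exp(2πi(u_j − 1/2))). -/
theorem XiMat_intertwines_shift (N : ℕ) [NeZero N] (τ : ℂ) (hτ : 0 < τ.im)
    (u : Fin N → ℂ) :
    ∀ (z : ℂ) (k j : Fin N),
      XiMat N τ u (z + τ) k j =
        Complex.exp (2 * Real.pi * Complex.I *
            (-z / N - τ / (2 * N) + u j - 1 / 2)) *
          XiMat N τ u z (k + 1) j := by
  intro z k j
  have hN : (N : ℂ) ≠ 0 := Nat.cast_ne_zero.mpr (NeZero.ne N)
  simp only [XiMat, Matrix.of_apply]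
  have hw : z + τ - N * u j = (z - N * u j) + (N * τ) * (1 / N) := by
    field_simp
    ring
  rw [hw, thetaC_shift]
  have hexp : (2 * Real.pi * Complex.I *
        (-(N * τ) * (1 / (N : ℂ)) ^ 2 / 2 - (1 / (N : ℂ)) * ((z - N * u j) + (N : ℂ) / 2))) =
      (2 * Real.pi * Complex.I * (-z / N - τ / (2 * N) + u j - 1 / 2)) := by
    congr 1
    field_simp
    ring
  rw [hexp]
  congr 1
  have hv : ((k + 1 : Fin N)).val = (k.val + 1) % N := by
    rw [Fin.add_def, Fin.val_one']
    simp [Nat.add_mod]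
  rcases eq_or_ne (k.val + 1) N with h | h
  · have hv0 : ((k + 1 : Fin N)).val = 0 := by rw [hv, h, Nat.mod_self]
    have hc : ((k.val : ℂ) + 1) = (N : ℂ) := by exact_mod_cast congrArg (Nat.cast : ℕ → ℂ) h
    have ha : ((k.val : ℂ) + 1) / N - 1 / 2 + 1 / N =
        ((((k + 1 : Fin N)).val : ℂ) + 1) / N - 1 / 2 + ((1 : ℤ) : ℂ) := by
      rw [hv0, hc]
      push_cast
      field_simp
      ring
    rw [ha, thetaC_add_int]
  · have hlt : k.val + 1 < N := by
      have := k.isLt; omega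
    have hv1 : ((k + 1 : Fin N)).val = k.val + 1 := by
      rw [hv, Nat.mod_eq_of_lt hlt]
    have ha : ((k.val : ℂ) + 1) / N - 1 / 2 + 1 / N =
        ((((k + 1 : Fin N)).val : ℂ) + 1) / N - 1 / 2 := by
      rw [hv1]
      push_cast
      field_simp
      ring
    rw [ha]
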